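/- arXiv:2303.03985 — 3 statements merged into one kernel-verified Lean document; each statement's English description precedes it below -/
import Mathlib

section
/- Consider the two backward Bellman recursions V^e and V^i defined on a finite horizon d = 0,…,D+1 with common nonincreasing final function K, where V^e_d(x) = inf_u { L_d(x,u) + V^e_{d+1}(f_d(x,u)) } and V^i_d(x) = inf_{u, x'} { L_d(x,u) + V^i_{d+1}(x') : f_d(x,u) ≥ x' }. If every V^e_d (d = 0,…,D+1) is nonincreasing with respect to the componentwise order on ℝⁿ, then V^i_d = V^e_d for every d ∈ {0,…,D+1}. -/
open scoped ENNReal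

/-- If the equality-constrained Bellman value functions are nonincreasing
(for the componentwise order on `ℝⁿ`), then the relaxed (inequality-constrained)
Bellman value functions coincide with them at every stage. -/
theorem relaxed_bellman_eq_equality_bellman_of_antitone
    {n : ℕ} {U : ℕ → Type*} (D : ℕ)
    (L : (d : ℕ) → (Fin n → ℝ) → U d → ℝ≥0∞)
    (f : (d : ℕ) → (Fin n → ℝ) → U d → (Fin n → ℝ))
    (K : (Fin n → ℝ) → ℝ≥0∞) (hK : Antitone K)
    (Ve Vi : ℕ → (Fin n → ℝ) → ℝ≥0∞)
    (hVeK : Ve (D + 1) = K)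
    (hViK : Vi (D + 1) = K)
    (hVe : ∀ d ≤ D, ∀ x, Ve d x = ⨅ u : U d, L d x u + Ve (d + 1) (f d x u))
    (hVi : ∀ d ≤ D, ∀ x,
      Vi d x = ⨅ u : U d, ⨅ x' ∈ {x' : Fin n → ℝ | x' ≤ f d x u},
        L d x u + Vi (d + 1) x')
    (hmono : ∀ d ≤ D + 1, Antitone (Ve d)) :
    ∀ d ≤ D + 1, Vi d = Ve d := by
  have key : ∀ k, k ≤ D + 1 → Vi (D + 1 - k) = Ve (D + 1 - k) := by
    intro k
    induction k with
    | zero => intro _; simp [hVeK, hViK]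
    | succ k ih =>
      intro hk
      have ihk := ih (Nat.le_of_succ_le hk)
      have hdD : D + 1 - (k + 1) ≤ D := by omega
      have hsucc : D + 1 - (k + 1) + 1 = D + 1 - k := by omega
      set d := D + 1 - (k + 1) with hd
      funext x
      rw [hVi d hdD, hVe d hdD]
      refine iInf_congr fun u => ?_
      have hViVe : Vi (d + 1) = Ve (d + 1) := by rw [hsucc]; exact ihk
      rw [hViVe]
      apply le_antisymm
      · exact iInf₂_le_of_le (f d x u) (le_refl (f d x u)) le_rfl
      · refine le_iInf₂ fun x' hx' => ?_
        exact add_le_add le_rfl (hmono (d + 1) (by omega) hx')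
  intro d hd
  have := key (D + 1 - d) (by omega)
  rwa [Nat.sub_sub_self hd] at this
end

section
/- Let V_d, d = 0,…,D+1, be defined by the backward recursion V_{D+1} = K and V_d(x) = inf_{u, x'} { L_d(x,u) + V_{d+1}(x') : f_d(x,u) ≥ x' }. Define the dualized recursion by V̲_{D+1} = K and V̲_d(x) = sup_{p ≤ 0} ( L^P_d(x,p) − (V̲_{d+1})*(p) ), where L^P_d(x,p) = inf_u ( L_d(x,u) + ⟨p, f_d(x,u)⟩ ) and * denotes the Fenchel conjugate (with lower Moreau addition conventions for ±∞). Then V̲_d ≤ V_d for every d ∈ {0,…,D+1}. -/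
open scoped ENNReal BigOperators
open scoped NNReal

/-- The standard scalar product on `ℝⁿ`. -/
noncomputable def dotp {n : ℕ} (p x : Fin n → ℝ) : ℝ := ∑ i, p i * x i

/-- Coercion `ℝ≥0∞ → EReal` preserves infima. -/
lemma coe_ennreal_iInf_aux {ι : Sort*} (g : ι → ℝ≥0∞) :
    ((⨅ i, g i : ℝ≥0∞) : EReal) = ⨅ i, (g i : EReal) := by
  refine le_antisymm (le_iInf fun i => EReal.coe_ennreal_le_coe_ennreal_iff.2 (iInf_le g i)) ?_
  set m := ⨅ i, g i with hm
  rcases eq_or_ne m ⊤ with h | h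
  · have : ∀ i, g i = ⊤ := by simpa [hm, iInf_eq_top] using h
    simp [h, this, EReal.coe_ennreal_top]
  · refine le_of_forall_gt_imp_ge_of_dense fun c hc => ?_
    induction c with
    | bot => exact absurd hc (by simp)
    | coe r =>
      have hr0 : (0:ℝ) ≤ r := by
        have := (EReal.coe_ennreal_nonneg m).trans hc.le
        exact_mod_cast this
      have hmr : m < ENNReal.ofReal r := by
        rw [← EReal.coe_ennreal_lt_coe_ennreal_iff, EReal.coe_ennreal_ofReal,
          max_eq_left hr0]
        exact hc
      obtain ⟨i, hi⟩ := iInf_lt_iff.1 hmr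
      refine (iInf_le _ i).trans ?_
      rw [← max_eq_left hr0, ← EReal.coe_ennreal_ofReal]
      exact (EReal.coe_ennreal_le_coe_ennreal_iff.2 hi.le)
    | top => exact le_top

/-- If `p ≤ 0` and `a ≤ b` componentwise then `⟨p,b⟩ ≤ ⟨p,a⟩`. -/
lemma dotp_antitone {n : ℕ} {p a b : Fin n → ℝ} (hp : p ≤ 0) (hab : a ≤ b) :
    dotp p b ≤ dotp p a := by
  unfold dotp
  refine Finset.sum_le_sum fun i _ => ?_
  exact mul_le_mul_of_nonpos_left (hab i) (hp i)

/-- Key elementary `EReal` inequality. -/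
lemma step2_aux (L W : ℝ≥0∞) (r s : ℝ) (hrs : r ≤ s) (V : EReal) (hV : V ≤ (W : EReal)) :
    ((L : EReal) + (r : EReal)) - ((s : EReal) - V) ≤ ((L + W : ℝ≥0∞) : EReal) := by
  rcases eq_or_ne W (⊤ : ℝ≥0∞) with rfl | hW
  · simp [EReal.coe_ennreal_top]
  rcases eq_or_ne L (⊤ : ℝ≥0∞) with rfl | hL
  · simp [EReal.coe_ennreal_top]
  lift L to ℝ≥0 using hL
  lift W to ℝ≥0 using hW
  rw [EReal.coe_nnreal_eq_coe_real] at hV ⊢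
  induction V with
  | bot =>
    have h1 : ((s : EReal) - ⊥) = ⊤ := EReal.sub_bot (EReal.coe_ne_bot s)
    rw [h1, EReal.sub_top]
    exact bot_le
  | coe v =>
    have hv : v ≤ (W : ℝ) := by exact_mod_cast hV
    have hLW : ((L + W : ℝ≥0∞) : EReal) = (((L : ℝ) + (W : ℝ) : ℝ) : EReal) := by
      rw [EReal.coe_ennreal_add, EReal.coe_nnreal_eq_coe_real, EReal.coe_nnreal_eq_coe_real,
        EReal.coe_add]
    rw [hLW, ← EReal.coe_sub, ← EReal.coe_add, ← EReal.coe_sub, EReal.coe_le_coe_iff]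
    linarith
  | top =>
    exact absurd hV (by simp [EReal.coe_lt_top])

/-- The price (dual) backward recursion yields lower bounds of the relaxed
(inequality-constrained) Bellman value functions at every stage.
Here `(V̲_{d+1})*` is the Fenchel conjugate, and additions/subtractions of
extended reals follow Moreau's lower addition convention
(in Mathlib's `EReal`, `⊥ + ⊤ = ⊥`). -/
theorem price_decomposition_lower_bound
    {n : ℕ} {U : ℕ → Type*} (D : ℕ)
    (L : (d : ℕ) → (Fin n → ℝ) → U d → ℝ≥0∞)
    (f : (d : ℕ) → (Fin n → ℝ) → U d → (Fin n → ℝ))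
    (K : (Fin n → ℝ) → ℝ≥0∞)
    (Vi : ℕ → (Fin n → ℝ) → ℝ≥0∞)
    (Vlow : ℕ → (Fin n → ℝ) → EReal)
    (hViK : Vi (D + 1) = K)
    (hVlowK : ∀ x, Vlow (D + 1) x = (K x : EReal))
    (hVi : ∀ d ≤ D, ∀ x,
      Vi d x = ⨅ u : U d, ⨅ x' ∈ {x' : Fin n → ℝ | x' ≤ f d x u},
        L d x u + Vi (d + 1) x')
    (hVlow : ∀ d ≤ D, ∀ x,
      Vlow d x = ⨆ p ∈ {p : Fin n → ℝ | p ≤ 0},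
        ((⨅ u : U d, ((L d x u : EReal) + ((dotp p (f d x u) : ℝ) : EReal)))
          - (⨆ x' : Fin n → ℝ, ((dotp p x' : ℝ) : EReal) - Vlow (d + 1) x')) ) :
    ∀ d ≤ D + 1, ∀ x, Vlow d x ≤ (Vi d x : EReal) := by
  have key : ∀ j d, d + j = D + 1 → ∀ x, Vlow d x ≤ (Vi d x : EReal) := by
    intro j
    induction j with
    | zero =>
      intro d hd x
      obtain rfl : d = D + 1 := by omega
      rw [hVlowK, hViK]
    | succ j ih =>
      intro d hd x
      have hdD : d ≤ D := by omega
      have IH : ∀ y, Vlow (d + 1) y ≤ (Vi (d + 1) y : EReal) := ih (d + 1) (by omega)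
      rw [hVlow d hdD x]
      apply iSup₂_le
      intro p hp
      rw [hVi d hdD x]
      simp only [coe_ennreal_iInf_aux]
      refine le_iInf fun u => le_iInf fun x' => le_iInf fun hx' => ?_
      refine le_trans (EReal.sub_le_sub (iInf_le _ u) (le_iSup _ x')) ?_
      exact step2_aux _ _ _ _ (dotp_antitone hp hx') _ (IH x')
  intro d hd x
  exact key (D + 1 - d) d (by omega) x
end

section
/- By backward induction on t from T down to 0: if the final cost K is nonincreasing in (s,h), then all Bellman value functions V_t of the battery problem are nonincreasing in (s,h). -/
open MeasureTheory
open scoped ENNReal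

/-- Feasible charge/discharge controls for the battery problem:
`S̲ − s ≤ ρᶜ u⁺ − ρᵈ u⁻ ≤ S̄ − s`, `u⁺ + u⁻ ≤ h`, `U̲ ≤ u ≤ Ū`. -/
def feasible (ρc ρd Slo Shi Ulo Uhi s h : ℝ) : Set ℝ :=
  {u : ℝ | Slo - s ≤ ρc * max u 0 - ρd * max (-u) 0 ∧
    ρc * max u 0 - ρd * max (-u) 0 ≤ Shi - s ∧
    max u 0 + max (-u) 0 ≤ h ∧ Ulo ≤ u ∧ u ≤ Uhi}

/-- One-step battery value:
`inf { c (u−w)⁺ + Vnext(s + ρᶜu⁺ − ρᵈu⁻, h − u⁺ − u⁻) : u feasible }`. -/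
noncomputable def oneStep (ρc ρd Slo Shi Ulo Uhi c : ℝ)
    (Vnext : ℝ → ℝ → ℝ≥0∞) (s h w : ℝ) : ℝ≥0∞ :=
  ⨅ u ∈ feasible ρc ρd Slo Shi Ulo Uhi s h,
    ENNReal.ofReal (c * max (u - w) 0) +
      Vnext (s + ρc * max u 0 - ρd * max (-u) 0) (h - max u 0 - max (-u) 0)

lemma oneStep_mono (ρc ρd Slo Shi Ulo Uhi c : ℝ)
    (hρc : 0 < ρc) (hρd : 0 < ρd) (hS : Slo ≤ Shi) (hUlo : Ulo ≤ 0) (hc : 0 ≤ c)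
    (Vnext : ℝ → ℝ → ℝ≥0∞)
    (hV : ∀ s₁ s₂ h₁ h₂ : ℝ, Slo ≤ s₁ → s₁ ≤ s₂ → s₂ ≤ Shi → h₁ ≤ h₂ →
      Vnext s₂ h₂ ≤ Vnext s₁ h₁)
    (s s' h h' w : ℝ) (hs0 : Slo ≤ s) (hss : s ≤ s') (hs1 : s' ≤ Shi) (hh : h ≤ h') :
    oneStep ρc ρd Slo Shi Ulo Uhi c Vnext s' h' w ≤
      oneStep ρc ρd Slo Shi Ulo Uhi c Vnext s h w := by
  unfold oneStep
  refine le_iInf₂ fun u hu => ?_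
  obtain ⟨h1, h2, h3, h4, h5⟩ := hu
  by_cases hcase : ρc * max u 0 - ρd * max (-u) 0 ≤ Shi - s'
  · refine iInf₂_le_of_le u ⟨by linarith, hcase, by linarith, h4, h5⟩ ?_
    gcongr
    apply hV
    · linarith
    · linarith
    · linarith
    · linarith
  · push_neg at hcase
    have hu0 : 0 < u := by
      by_contra hu0
      push_neg at hu0
      have : max u 0 = 0 := max_eq_right hu0
      have h2' : max (-u) 0 = -u := max_eq_left (by linarith)
      rw [this, h2'] at hcase
      nlinarith [mul_nonneg hρd.le (neg_nonneg.2 hu0)]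
    have hmu : max u 0 = u := max_eq_left hu0.le
    have hmnu : max (-u) 0 = 0 := max_eq_right (by linarith)
    rw [hmu, hmnu] at h1 h2 h3 hcase
    set u' : ℝ := (Shi - s') / ρc with hu'
    have hu'0 : 0 ≤ u' := div_nonneg (by linarith) hρc.le
    have hcu' : ρc * u' = Shi - s' := by
      rw [hu', mul_div_cancel₀ _ hρc.ne']
    have hu'u : u' ≤ u := by
      rw [hu', div_le_iff₀ hρc]; nlinarith
    have hmu' : max u' 0 = u' := max_eq_left hu'0
    have hmnu' : max (-u') 0 = 0 := max_eq_right (by linarith)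
    refine iInf₂_le_of_le u' ⟨?_, ?_, ?_, ?_, ?_⟩ ?_
    · rw [hmu', hmnu']; linarith
    · rw [hmu', hmnu']; linarith
    · rw [hmu', hmnu']; linarith
    · linarith
    · linarith
    · rw [hmu', hmnu']
      refine add_le_add (ENNReal.ofReal_le_ofReal ?_) ?_
      · exact mul_le_mul_of_nonneg_left (max_le_max (by linarith) le_rfl) hc
      · have heq : s' + ρc * u' - ρd * 0 = Shi := by linarith
        rw [heq]
        exact hV (s + ρc * (u ⊔ 0) - ρd * (-u ⊔ 0)) Shi (h - (u ⊔ 0) - (-u ⊔ 0)) (h' - u' - 0)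
          (by rw [hmu, hmnu]; linarith) (by rw [hmu, hmnu]; linarith) le_rfl
          (by rw [hmu, hmnu]; linarith)

/-- Backward induction for the battery problem: if the final cost `K` is
nonincreasing in `(s,h)`, then every Bellman value function `V t` of the battery
problem is nonincreasing in `(s,h)` (with the state of charge within `[S̲,S̄]`). -/
theorem battery_bellman_antitone
    {Ω : Type*} [MeasurableSpace Ω] (μ : Measure Ω) [IsProbabilityMeasure μ]
    (T : ℕ) (W : ℕ → Ω → ℝ)
    (ρc ρd Slo Shi Ulo Uhi : ℝ) (c : ℕ → ℝ)
    (hρc : 0 < ρc) (hρd : 0 < ρd) (hS : Slo ≤ Shi)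
    (hUlo : Ulo ≤ 0) (hUhi : 0 ≤ Uhi) (hc : ∀ t, 0 ≤ c t)
    (K : ℝ → ℝ → ℝ≥0∞)
    (hK : ∀ s₁ s₂ h₁ h₂ : ℝ, s₁ ≤ s₂ → h₁ ≤ h₂ → K s₂ h₂ ≤ K s₁ h₁)
    (V : ℕ → ℝ → ℝ → ℝ≥0∞)
    (hVT : V T = K)
    (hV : ∀ t < T, ∀ s h : ℝ,
      V t s h = ∫⁻ ω, oneStep ρc ρd Slo Shi Ulo Uhi (c t) (V (t + 1)) s h (W t ω) ∂μ) :
    ∀ t ≤ T, ∀ s s' h h' : ℝ,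
      Slo ≤ s → s ≤ s' → s' ≤ Shi → h ≤ h' → V t s' h' ≤ V t s h := by
  have main : ∀ n t, t + n = T → ∀ s s' h h' : ℝ,
      Slo ≤ s → s ≤ s' → s' ≤ Shi → h ≤ h' → V t s' h' ≤ V t s h := by
    intro n
    induction n with
    | zero =>
      intro t ht s s' h h' _ hss _ hh
      have : t = T := by omega
      subst this; rw [hVT]; exact hK s s' h h' hss hh
    | succ n ih =>
      intro t ht s s' h h' hs0 hss hs1 hh
      have htT : t < T := by omega
      rw [hV t htT, hV t htT]
      refine lintegral_mono fun ω => ?_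
      exact oneStep_mono _ _ _ _ _ _ _ hρc hρd hS hUlo (hc t) _
        (fun s₁ s₂ h₁ h₂ a b d e => ih (t + 1) (by omega) s₁ s₂ h₁ h₂ a b d e)
        s s' h h' (W t ω) hs0 hss hs1 hh
  intro t ht
  exact main (T - t) t (by omega)
end
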